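/- There exists ε₀ > 0 such that for every ε ∈ (0, ε₀) and every n ≥ 1 the following holds. Let Ω = { x ∈ ℝⁿ : 1/2 < ‖x‖ < 1 + ε } and let F : Ω → ℝ be a (1+ε)-Lipschitz, (−1+ε)-concave function satisfying −(1 − ε³)·‖x‖²/2 ≥ F(x) ≥ −(1 + ε³)·‖x‖²/2 for all x ∈ Ω. Then the set C := { x ∈ ℝⁿ : ‖x‖ ≤ 1/2 } ∪ { x ∈ Ω : F(x) ≥ −1/2 } is a convex subset of ℝⁿ. -/

import Mathlib

/-- A unit-speed geodesic (on `[a,b]`) in a metric space. -/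
def IsUnitSpeedGeodesic {X : Type*} [MetricSpace X] (γ : ℝ → X) (a b : ℝ) : Prop :=
  ∀ s ∈ Set.Icc a b, ∀ t ∈ Set.Icc a b, dist (γ s) (γ t) = |s - t|

/-- `f` is `λ`-concave on `Ω`: along every unit-speed geodesic with image in `Ω`,
`t ↦ f (γ t) - (λ/2) t²` is concave. In Euclidean space unit-speed geodesics are
exactly unit-speed parametrized line segments. -/
def LambdaConcaveOn {X : Type*} [MetricSpace X] (lam : ℝ) (f : X → ℝ) (Ω : Set X) : Prop :=
  ∀ (γ : ℝ → X) (a b : ℝ), a ≤ b → IsUnitSpeedGeodesic γ a b →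
    (∀ t ∈ Set.Icc a b, γ t ∈ Ω) →
    ConcaveOn ℝ (Set.Icc a b) (fun t => f (γ t) - lam / 2 * t ^ 2)

set_option maxHeartbeats 1000000

section Aux
variable {n : ℕ}

lemma norm_comb_le (u v : EuclideanSpace ℝ (Fin n)) {θ : ℝ} (h0 : 0 ≤ θ) (h1 : θ ≤ 1) :
    ‖(1-θ)•u + θ•v‖ ≤ (1-θ)*‖u‖ + θ*‖v‖ := by
  calc ‖(1-θ)•u + θ•v‖ ≤ ‖(1-θ)•u‖ + ‖θ•v‖ := norm_add_le _ _
  _ = (1-θ)*‖u‖ + θ*‖v‖ := by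
      rw [norm_smul, norm_smul, Real.norm_eq_abs, Real.norm_eq_abs,
        abs_of_nonneg (by linarith), abs_of_nonneg h0]

lemma key_concave {ε : ℝ} (hε1 : ε < 1) {F : EuclideanSpace ℝ (Fin n) → ℝ}
    {Ω : Set (EuclideanSpace ℝ (Fin n))}
    (hconc : LambdaConcaveOn (-1 + ε) F Ω) (u v : EuclideanSpace ℝ (Fin n))
    (hmem : ∀ θ ∈ Set.Icc (0:ℝ) 1, (1-θ)•u + θ•v ∈ Ω)
    (hu : F u ≥ -(1/2)) (hv : F v ≥ -(1/2)) {θ : ℝ} (hθ0 : 0 ≤ θ) (hθ1 : θ ≤ 1) :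
    F ((1-θ)•u + θ•v) ≥ -(1/2) := by
  by_cases huv : u = v
  · subst huv
    have h : (1-θ)•u + θ•u = u := by module
    rw [h]; exact hu
  · set L : ℝ := ‖v - u‖ with hLdef
    have hL : 0 < L := by
      simpa [hLdef, sub_eq_zero] using (Ne.symm huv)
    set γ : ℝ → EuclideanSpace ℝ (Fin n) := fun t => u + (t/L) • (v - u) with hγdef
    have hγeq : ∀ t, γ t = (1 - t/L) • u + (t/L) • v := by
      intro t; simp only [hγdef]; module
    have hgeo : IsUnitSpeedGeodesic γ 0 L := by
      intro s _ t _
      have hdiff : γ s - γ t = ((s - t)/L) • (v - u) := by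
        simp only [hγdef]; module
      rw [dist_eq_norm, hdiff, norm_smul, Real.norm_eq_abs, abs_div, abs_of_pos hL]
      field_simp
      rfl
    have himg : ∀ t ∈ Set.Icc (0:ℝ) L, γ t ∈ Ω := by
      intro t ht
      rw [hγeq]
      exact hmem (t/L) ⟨div_nonneg ht.1 hL.le, (div_le_one hL).2 ht.2⟩
    have hcc := hconc γ 0 L hL.le hgeo himg
    have h0m : (0:ℝ) ∈ Set.Icc (0:ℝ) L := ⟨le_refl _, hL.le⟩
    have hLm : L ∈ Set.Icc (0:ℝ) L := ⟨hL.le, le_refl _⟩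
    have hineq := hcc.2 h0m hLm (by linarith : (0:ℝ) ≤ 1-θ) hθ0 (by ring)
    simp only [smul_eq_mul] at hineq
    have hpt : (1-θ) * (0:ℝ) + θ * L = θ * L := by ring
    rw [hpt] at hineq
    have hγ0 : γ 0 = u := by simp [hγdef]
    have hγL : γ L = v := by
      rw [hγeq, div_self hL.ne']; module
    have hγθ : γ (θ * L) = (1-θ)•u + θ•v := by
      rw [hγeq]
      have : θ * L / L = θ := by field_simp
      rw [this]
    rw [hγ0, hγL, hγθ] at hineq
    have hpos : 0 ≤ (-((-1+ε)/2)) * (L^2 * (θ * (1-θ))) :=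
      mul_nonneg (by linarith) (mul_nonneg (sq_nonneg _) (mul_nonneg hθ0 (by linarith)))
    nlinarith [hineq, hpos, mul_nonneg (by linarith : (0:ℝ) ≤ 1-θ) (by linarith : 0 ≤ F u + 1/2),
      mul_nonneg hθ0 (by linarith : 0 ≤ F v + 1/2)]

end Aux

/-- The sublevel set of a strictly concave approximation of `-‖x‖²/2` on the annulus
`{1/2 < ‖x‖ < 1 + ε}`, together with the closed ball of radius `1/2`, is convex. -/
theorem convex_region : ∃ ε₀ : ℝ, 0 < ε₀ ∧
    ∀ ε : ℝ, 0 < ε → ε < ε₀ → ∀ n : ℕ, 1 ≤ n →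
    ∀ F : EuclideanSpace ℝ (Fin n) → ℝ,
      (∀ x ∈ {x : EuclideanSpace ℝ (Fin n) | 1 / 2 < ‖x‖ ∧ ‖x‖ < 1 + ε},
        ∀ y ∈ {x : EuclideanSpace ℝ (Fin n) | 1 / 2 < ‖x‖ ∧ ‖x‖ < 1 + ε},
          |F x - F y| ≤ (1 + ε) * dist x y) →
      LambdaConcaveOn (-1 + ε) F {x : EuclideanSpace ℝ (Fin n) | 1 / 2 < ‖x‖ ∧ ‖x‖ < 1 + ε} →
      (∀ x ∈ {x : EuclideanSpace ℝ (Fin n) | 1 / 2 < ‖x‖ ∧ ‖x‖ < 1 + ε},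
        -(1 - ε ^ 3) * ‖x‖ ^ 2 / 2 ≥ F x ∧ F x ≥ -(1 + ε ^ 3) * ‖x‖ ^ 2 / 2) →
      Convex ℝ ({x : EuclideanSpace ℝ (Fin n) | ‖x‖ ≤ 1 / 2} ∪
        {x : EuclideanSpace ℝ (Fin n) | (1 / 2 < ‖x‖ ∧ ‖x‖ < 1 + ε) ∧ F x ≥ -(1 / 2)}) := by
  refine ⟨1/2, by norm_num, ?_⟩
  intro ε hε hεhalf n hn F _hLip hconc hbnd
  have hε1 : ε < 1 := by linarith
  have hε3pos : 0 < ε^3 := by positivity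
  have hε3lt : ε^3 < 1/8 := by
    have := pow_lt_pow_left₀ hεhalf hε.le (n := 3) (by norm_num)
    norm_num at this
    linarith
  set r₁ : ℝ := Real.sqrt (1/(1+ε^3)) with hr₁def
  set r₂ : ℝ := Real.sqrt (1/(1-ε^3)) with hr₂def
  have h1pε : (0:ℝ) < 1 + ε^3 := by linarith
  have h1mε : (0:ℝ) < 1 - ε^3 := by linarith
  have hr₁sq : r₁^2 = 1/(1+ε^3) := Real.sq_sqrt (by positivity)
  have hr₂sq : r₂^2 = 1/(1-ε^3) := Real.sq_sqrt (by positivity)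
  have hr₁pos : 0 < r₁ := Real.sqrt_pos.2 (by positivity)
  have hr₂pos : 0 < r₂ := Real.sqrt_pos.2 (by positivity)
  have half_lt_r₁ : 1/2 < r₁ := by
    have h : (1/2:ℝ)^2 < r₁^2 := by
      rw [hr₁sq, lt_div_iff₀ h1pε]; nlinarith
    exact lt_of_pow_lt_pow_left₀ 2 hr₁pos.le h
  have r₁_le_r₂ : r₁ ≤ r₂ := by
    apply Real.sqrt_le_sqrt
    apply div_le_div_of_nonneg_left (by norm_num) h1mε (by linarith)
  have r₂_lt : r₂ < 1 + ε := by
    have hε2 : ε^2 < 1/4 := by nlinarith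
    have h2 : r₂^2 < (1+ε)^2 := by
      rw [hr₂sq, div_lt_iff₀ h1mε]; nlinarith [mul_pos hε hε, pow_pos hε 3, pow_pos hε 4, pow_pos hε 5]
    exact lt_of_pow_lt_pow_left₀ 2 (by linarith) h2
  -- notation for the sets
  set Ω : Set (EuclideanSpace ℝ (Fin n)) :=
    {x : EuclideanSpace ℝ (Fin n) | 1 / 2 < ‖x‖ ∧ ‖x‖ < 1 + ε} with hΩdef
  set C : Set (EuclideanSpace ℝ (Fin n)) :=
    {x : EuclideanSpace ℝ (Fin n) | ‖x‖ ≤ 1 / 2} ∪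
      {x : EuclideanSpace ℝ (Fin n) | (1 / 2 < ‖x‖ ∧ ‖x‖ < 1 + ε) ∧ F x ≥ -(1 / 2)} with hCdef
  -- membership in Ω for points with norm in (1/2, r₂]
  have hΩmem : ∀ w : EuclideanSpace ℝ (Fin n), 1/2 < ‖w‖ → ‖w‖ ≤ r₂ → w ∈ Ω := by
    intro w h1 h2
    exact ⟨h1, lt_of_le_of_lt h2 r₂_lt⟩
  -- any point of norm ≤ r₁ is in C
  have memC_of_le_r₁ : ∀ w : EuclideanSpace ℝ (Fin n), ‖w‖ ≤ r₁ → w ∈ C := by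
    intro w hw
    by_cases h : ‖w‖ ≤ 1/2
    · exact Or.inl h
    · push_neg at h
      have hwΩ : w ∈ Ω := hΩmem w h (hw.trans r₁_le_r₂)
      refine Or.inr ⟨hwΩ, ?_⟩
      have hb := (hbnd w hwΩ).2
      have hsq : ‖w‖^2 ≤ 1/(1+ε^3) := by
        rw [← hr₁sq]; exact pow_le_pow_left₀ (norm_nonneg w) hw 2
      have : (1+ε^3) * ‖w‖^2 ≤ 1 := by
        rw [← le_div_iff₀' h1pε]; exact hsq
      nlinarith [hb]
  -- any point of C has norm ≤ r₂
  have norm_le_r₂ : ∀ w ∈ C, ‖w‖ ≤ r₂ := by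
    intro w hw
    rcases hw with h | ⟨⟨h1, h2⟩, hF⟩
    · simp only [Set.mem_setOf_eq] at h
      linarith
    · have hb := (hbnd w ⟨h1, h2⟩).1
      have hsq : (1-ε^3) * ‖w‖^2 ≤ 1 := by nlinarith
      have h3 : ‖w‖^2 ≤ r₂^2 := by
        rw [hr₂sq, le_div_iff₀ h1mε]; linarith [hsq]
      rw [← Real.sqrt_sq (norm_nonneg w), ← Real.sqrt_sq hr₂pos.le]
      exact Real.sqrt_le_sqrt h3
  -- a point of C with norm > 1/2 has F ≥ -1/2
  have memC_big : ∀ w ∈ C, 1/2 < ‖w‖ → F w ≥ -(1/2) := by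
    intro w hw h
    rcases hw with h' | ⟨_, hF⟩
    · simp only [Set.mem_setOf_eq] at h'
      linarith
    · exact hF
  -- main convexity
  intro x hx y hy a b ha hb hab
  set p : ℝ → EuclideanSpace ℝ (Fin n) := fun s => (1-s) • x + s • y with hpdef
  have hp0 : p 0 = x := by simp [hpdef]
  have hp1 : p 1 = y := by simp [hpdef]
  have hz : a • x + b • y = p b := by
    have : a = 1 - b := by linarith
    rw [this, hpdef]
  rw [hz]
  -- convex combination identity for p
  have hpcomb : ∀ s t θ : ℝ, p ((1-θ)*s + θ*t) = (1-θ) • p s + θ • p t := by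
    intro s t θ
    simp only [hpdef]; module
  have hpconv : ∀ s t θ : ℝ, 0 ≤ θ → θ ≤ 1 →
      ‖p ((1-θ)*s + θ*t)‖ ≤ (1-θ)*‖p s‖ + θ*‖p t‖ := by
    intro s t θ h0 h1
    rw [hpcomb]
    exact norm_comb_le _ _ h0 h1
  have hx2 : ‖x‖ ≤ r₂ := norm_le_r₂ x hx
  have hy2 : ‖y‖ ≤ r₂ := norm_le_r₂ y hy
  by_cases hzr : ‖p b‖ ≤ r₁
  · exact memC_of_le_r₁ _ hzr
  push_neg at hzr
  -- helper to conclude z ∈ C once we know F (p b) ≥ -1/2 and norm bounds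
  have conclude : ‖p b‖ ≤ r₂ → F (p b) ≥ -(1/2) → p b ∈ C := by
    intro h1 h2
    exact Or.inr ⟨hΩmem _ (lt_trans half_lt_r₁ hzr) h1, h2⟩
  by_cases hb0 : b = 0
  · subst hb0; rw [hp0]; exact hx
  by_cases hb1 : b = 1
  · subst hb1; rw [hp1]; exact hy
  have hb0' : 0 < b := lt_of_le_of_ne hb (Ne.symm hb0)
  have hb1' : b < 1 := lt_of_le_of_ne (by linarith) hb1
  -- the sublevel set
  set T : Set ℝ := {s | s ∈ Set.Icc (0:ℝ) 1 ∧ ‖p s‖ ≤ r₁} with hTdef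
  have hpcont : Continuous fun s => ‖p s‖ := by
    apply Continuous.norm
    exact ((continuous_const.sub continuous_id).smul continuous_const).add
      (continuous_id.smul continuous_const)
  have hTclosed : IsClosed T := by
    have : T = Set.Icc (0:ℝ) 1 ∩ {s | ‖p s‖ ≤ r₁} := rfl
    rw [this]
    exact isClosed_Icc.inter (isClosed_le hpcont continuous_const)
  have hbT : b ∉ T := fun h => absurd h.2 (not_le.2 hzr)
  -- T lies on one side of b
  have honeside : (∀ s ∈ T, b < s) ∨ (∀ s ∈ T, s < b) := by
    by_contra h
    push_neg at h
    obtain ⟨⟨s, hs, hsb⟩, ⟨t, ht, htb⟩⟩ := h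
    -- hsb : s ≤ b, htb : b ≤ t
    have hsb' : s < b := lt_of_le_of_ne hsb (fun h => hbT (h ▸ hs))
    have htb' : b < t := lt_of_le_of_ne htb (fun h => hbT (h ▸ ht))
    set θ : ℝ := (b - s)/(t - s) with hθdef
    have hts : 0 < t - s := by linarith
    have hθ0 : 0 ≤ θ := div_nonneg (by linarith) hts.le
    have hθ1 : θ ≤ 1 := (div_le_one hts).2 (by linarith)
    have hcomb : (1-θ)*s + θ*t = b := by
      have hθm : θ * (t - s) = b - s := by rw [hθdef]; exact div_mul_cancel₀ _ hts.ne'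
      linear_combination hθm
    have h5 := hpconv s t θ hθ0 hθ1
    rw [hcomb] at h5
    have h6 : (1-θ)*‖p s‖ ≤ (1-θ)*r₁ := mul_le_mul_of_nonneg_left hs.2 (by linarith)
    have h7 : θ*‖p t‖ ≤ θ*r₁ := mul_le_mul_of_nonneg_left ht.2 hθ0
    have : ‖p b‖ ≤ r₁ := by linarith
    linarith
  -- handle the two symmetric cases; we set up the endpoint data ⟨u, v, on segment⟩
  -- Case distinction
  by_cases hTe : T = ∅
  · -- no sublevel points: endpoints x, y both have norm > r₁
    have hxgt : r₁ < ‖x‖ := by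
      by_contra h
      push_neg at h
      have : (0:ℝ) ∈ T := ⟨⟨le_refl 0, by norm_num⟩, by rwa [hp0]⟩
      rw [hTe] at this; exact this
    have hygt : r₁ < ‖y‖ := by
      by_contra h
      push_neg at h
      have : (1:ℝ) ∈ T := ⟨⟨by norm_num, le_refl 1⟩, by rwa [hp1]⟩
      rw [hTe] at this; exact this
    have hFx : F x ≥ -(1/2) := memC_big x hx (by linarith)
    have hFy : F y ≥ -(1/2) := memC_big y hy (by linarith)
    have hmem : ∀ θ ∈ Set.Icc (0:ℝ) 1, (1-θ)•x + θ•y ∈ Ω := by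
      intro θ hθ
      have heq : (1-θ)•x + θ•y = p ((1-θ)*0 + θ*1) := by
        rw [hpcomb, hp0, hp1]
      rw [heq]
      have hθin : ((1-θ)*0 + θ*1) ∈ Set.Icc (0:ℝ) 1 := by
        constructor <;> nlinarith [hθ.1, hθ.2]
      have hgt : r₁ < ‖p ((1-θ)*0 + θ*1)‖ := by
        by_contra h
        push_neg at h
        have : ((1-θ)*0 + θ*1) ∈ T := ⟨hθin, h⟩
        rw [hTe] at this; exact this
      have hle : ‖p ((1-θ)*0 + θ*1)‖ ≤ r₂ := by
        have h5 := hpconv 0 1 θ hθ.1 hθ.2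
        rw [hp0, hp1] at h5
        have h6 : (1-θ)*‖x‖ ≤ (1-θ)*r₂ := mul_le_mul_of_nonneg_left hx2 (by linarith [hθ.2])
        have h7 : θ*‖y‖ ≤ θ*r₂ := mul_le_mul_of_nonneg_left hy2 hθ.1
        linarith
      exact hΩmem _ (by linarith) hle
    have := key_concave hε1 hconc x y hmem hFx hFy hb hb1'.le
    have heq : (1-b)•x + b•y = p b := rfl
    rw [heq] at this
    apply conclude _ this
    have h := hpconv 0 1 b hb hb1'.le
    rw [hp0, hp1] at h
    have he : (1-b)*0 + b*1 = b := by ring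
    rw [he] at h
    have h6 : (1-b)*‖x‖ ≤ (1-b)*r₂ := mul_le_mul_of_nonneg_left hx2 (by linarith)
    have h7 : b*‖y‖ ≤ b*r₂ := mul_le_mul_of_nonneg_left hy2 hb
    linarith
  · -- T nonempty
    have hTne : T.Nonempty := Set.nonempty_iff_ne_empty.2 hTe
    rcases honeside with hright | hleft
    · -- T ⊆ (b, 1]; take b* = sInf T
      have hbdd : BddBelow T := ⟨0, fun s hs => hs.1.1⟩
      set c : ℝ := sInf T with hcdef
      have hcT : c ∈ T := hTclosed.csInf_mem hTne hbdd
      have hbc : b < c := hright c hcT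
      have hc1 : c ≤ 1 := hcT.1.2
      have hgtlt : ∀ s, 0 ≤ s → s < c → r₁ < ‖p s‖ := by
        intro s h0 hsc
        by_contra h
        push_neg at h
        have : s ∈ T := ⟨⟨h0, by linarith⟩, h⟩
        exact absurd (csInf_le hbdd this) (not_le.2 hsc)
      -- norm at c is ≥ r₁ by continuity from the left
      have hnormc : r₁ ≤ ‖p c‖ := by
        have htend : Filter.Tendsto (fun s => ‖p s‖) (nhdsWithin c (Set.Iio c)) (nhds ‖p c‖) :=
          (hpcont.tendsto c).mono_left nhdsWithin_le_nhds
        refine ge_of_tendsto htend ?_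
        filter_upwards [Ioo_mem_nhdsLT_of_mem ⟨hbc, le_refl c⟩] with s hs
        exact (hgtlt s (by linarith [hs.1, hb0']) hs.2).le
      have hxgt : r₁ < ‖x‖ := by rw [← hp0]; exact hgtlt 0 (le_refl 0) (by linarith)
      have hFx : F x ≥ -(1/2) := memC_big x hx (by linarith)
      -- p c ∈ C with F ≥ -1/2
      have hpcC : p c ∈ C := memC_of_le_r₁ _ hcT.2
      have hFc : F (p c) ≥ -(1/2) := memC_big _ hpcC (by linarith)
      -- the segment from x to p c stays in Ω
      have hnormub : ∀ θ : ℝ, 0 ≤ θ → θ ≤ 1 → ‖p (θ*c)‖ ≤ r₂ := by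
        intro θ h0 h1
        have h5 := hpconv 0 c θ h0 h1
        rw [hp0] at h5
        have he : (1-θ)*0 + θ*c = θ*c := by ring
        rw [he] at h5
        have h6 : (1-θ)*‖x‖ ≤ (1-θ)*r₂ := mul_le_mul_of_nonneg_left hx2 (by linarith)
        have h7 : θ*‖p c‖ ≤ θ*r₂ := mul_le_mul_of_nonneg_left (hcT.2.trans r₁_le_r₂) h0
        linarith
      have hmem : ∀ θ ∈ Set.Icc (0:ℝ) 1, (1-θ)•x + θ•(p c) ∈ Ω := by
        intro θ hθ
        have heq : (1-θ)•x + θ•(p c) = p ((1-θ)*0 + θ*c) := by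
          rw [hpcomb, hp0]
        have he : (1-θ)*0 + θ*c = θ*c := by ring
        rw [heq, he]
        have hlow : r₁ ≤ ‖p (θ*c)‖ := by
          rcases lt_or_eq_of_le (mul_le_of_le_one_left (by linarith) hθ.2 : θ*c ≤ c) with h | h
          · exact (hgtlt _ (mul_nonneg hθ.1 (by linarith)) h).le
          · rw [h]; exact hnormc
        exact hΩmem _ (by linarith) (hnormub θ hθ.1 hθ.2)
      have hθz0 : 0 ≤ b/c := div_nonneg hb (by linarith)
      have hθz1 : b/c ≤ 1 := (div_le_one (by linarith)).2 hbc.le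
      have hcne : c ≠ 0 := ne_of_gt (lt_trans hb0' hbc)
      have harg : (1-(b/c))*0 + (b/c)*c = b := by
        field_simp
        ring
      have hkey := key_concave hε1 hconc x (p c) hmem hFx hFc hθz0 hθz1
      have heq : (1-(b/c))•x + (b/c)•(p c) = p b := by
        rw [show (1-(b/c))•x + (b/c)•(p c) = p ((1-(b/c))*0 + (b/c)*c) by rw [hpcomb, hp0],
          harg]
      rw [heq] at hkey
      apply conclude _ hkey
      have h8 := hnormub (b/c) hθz0 hθz1
      have h9 : b/c*c = b := by field_simp
      rwa [h9] at h8
    · -- T ⊆ [0, b); take a* = sSup T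
      have hbdd : BddAbove T := ⟨1, fun s hs => hs.1.2⟩
      set c : ℝ := sSup T with hcdef
      have hcT : c ∈ T := hTclosed.csSup_mem hTne hbdd
      have hbc : c < b := hleft c hcT
      have hc0 : 0 ≤ c := hcT.1.1
      have hgtlt : ∀ s, c < s → s ≤ 1 → r₁ < ‖p s‖ := by
        intro s hsc h1
        by_contra h
        push_neg at h
        have : s ∈ T := ⟨⟨by linarith, h1⟩, h⟩
        exact absurd (le_csSup hbdd this) (not_le.2 hsc)
      have hnormc : r₁ ≤ ‖p c‖ := by
        have htend : Filter.Tendsto (fun s => ‖p s‖) (nhdsWithin c (Set.Ioi c)) (nhds ‖p c‖) :=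
          (hpcont.tendsto c).mono_left nhdsWithin_le_nhds
        refine ge_of_tendsto htend ?_
        filter_upwards [Ioo_mem_nhdsGT_of_mem ⟨le_refl c, hbc⟩] with s hs
        exact (hgtlt s hs.1 (by linarith [hs.2, hb1'])).le
      have hygt : r₁ < ‖y‖ := by rw [← hp1]; exact hgtlt 1 (by linarith) (le_refl 1)
      have hFy : F y ≥ -(1/2) := memC_big y hy (by linarith)
      have hpcC : p c ∈ C := memC_of_le_r₁ _ hcT.2
      have hFc : F (p c) ≥ -(1/2) := memC_big _ hpcC (by linarith)
      -- parametrize from p c to y : θ ↦ p (c + θ*(1-c)) = (1-θ)•p c + θ•y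
      have hnormub : ∀ θ : ℝ, 0 ≤ θ → θ ≤ 1 → ‖p ((1-θ)*c + θ*1)‖ ≤ r₂ := by
        intro θ h0 h1
        have h5 := hpconv c 1 θ h0 h1
        rw [hp1] at h5
        have h6 : (1-θ)*‖p c‖ ≤ (1-θ)*r₂ := mul_le_mul_of_nonneg_left (hcT.2.trans r₁_le_r₂) (by linarith)
        have h7 : θ*‖y‖ ≤ θ*r₂ := mul_le_mul_of_nonneg_left hy2 h0
        linarith
      have hmem : ∀ θ ∈ Set.Icc (0:ℝ) 1, (1-θ)•(p c) + θ•y ∈ Ω := by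
        intro θ hθ
        have heq : (1-θ)•(p c) + θ•y = p ((1-θ)*c + θ*1) := by
          rw [hpcomb, hp1]
        rw [heq]
        have hsge : c ≤ (1-θ)*c + θ*1 := by nlinarith [hθ.1, hθ.2]
        have hsle : (1-θ)*c + θ*1 ≤ 1 := by nlinarith [hθ.1, hθ.2]
        have hlow : r₁ ≤ ‖p ((1-θ)*c + θ*1)‖ := by
          rcases eq_or_lt_of_le hsge with h | h
          · rw [← h]; exact hnormc
          · exact (hgtlt _ h hsle).le
        exact hΩmem _ (by linarith) (hnormub θ hθ.1 hθ.2)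
      have h1c : 0 < 1 - c := by linarith
      have hθz0 : 0 ≤ (b - c)/(1 - c) := div_nonneg (by linarith) h1c.le
      have hθz1 : (b - c)/(1 - c) ≤ 1 := (div_le_one h1c).2 (by linarith)
      have hkey := key_concave hε1 hconc (p c) y hmem hFc hFy hθz0 hθz1
      have hcombeq : (1-(b - c)/(1 - c))*c + ((b - c)/(1 - c))*1 = b := by
        field_simp
        ring
      have heq : (1-(b - c)/(1 - c))•(p c) + ((b - c)/(1 - c))•y = p b := by
        rw [show (1-(b - c)/(1 - c))•(p c) + ((b - c)/(1 - c))•y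
            = p ((1-(b - c)/(1 - c))*c + ((b - c)/(1 - c))*1) by rw [hpcomb, hp1], hcombeq]
      rw [heq] at hkey
      apply conclude _ hkey
      have h8 := hnormub ((b - c)/(1 - c)) hθz0 hθz1
      rwa [hcombeq] at h8
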